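/- The extended function f satisfies f(x, y, z) ≥ π·max{x, y, z} for all (x, y, z) ∈ ℝ³. -/

import Mathlib

open Real

/-- Milnor's Lobachevsky function. -/
noncomputable def Lob (x : ℝ) : ℝ := -∫ t in (0:ℝ)..x, Real.log |2 * Real.sin t|

/-- Angle opposite the side of length `a` in a euclidean triangle with side
lengths `a`, `b`, `c`, given by the arccos formula (which, since `Real.arccos`
clamps, also implements the broken-triangle convention: the angle opposite a
too-long side is `π` and the other two angles are `0`). -/
noncomputable def eang (a b c : ℝ) : ℝ := Real.arccos ((b^2 + c^2 - a^2) / (2*b*c))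

/-- The open domain `𝒜` where `eˣ, e^y, e^z` satisfy the strict triangle
inequalities. -/
def Adom : Set (ℝ × ℝ × ℝ) :=
  {p | Real.exp p.1 < Real.exp p.2.1 + Real.exp p.2.2 ∧
       Real.exp p.2.1 < Real.exp p.2.2 + Real.exp p.1 ∧
       Real.exp p.2.2 < Real.exp p.1 + Real.exp p.2.1}

/-- The triangle function `f(x,y,z) = αx + βy + γz + Л(α) + Л(β) + Л(γ)`
(extended to all of `ℝ³` by the broken-triangle convention). -/
noncomputable def fTri (p : ℝ × ℝ × ℝ) : ℝ :=
  eang (Real.exp p.1) (Real.exp p.2.1) (Real.exp p.2.2) * p.1 +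
  eang (Real.exp p.2.1) (Real.exp p.2.2) (Real.exp p.1) * p.2.1 +
  eang (Real.exp p.2.2) (Real.exp p.1) (Real.exp p.2.1) * p.2.2 +
  Lob (eang (Real.exp p.1) (Real.exp p.2.1) (Real.exp p.2.2)) +
  Lob (eang (Real.exp p.2.1) (Real.exp p.2.2) (Real.exp p.1)) +
  Lob (eang (Real.exp p.2.2) (Real.exp p.1) (Real.exp p.2.1))


open MeasureTheory intervalIntegral Set

/-- `log` is interval integrable on `[0,2]`. -/
lemma II_log02 : IntervalIntegrable Real.log volume 0 2 := by
  have hg : IntervalIntegrable (fun x : ℝ => 2 * x ^ (-(1/2) : ℝ)) volume 0 2 :=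
    (intervalIntegrable_rpow' (by norm_num)).const_mul 2
  refine hg.mono_fun ?_ ?_
  · exact Real.measurable_log.aestronglyMeasurable.restrict
  · rw [Filter.EventuallyLE, ae_restrict_iff' measurableSet_uIoc]
    refine Filter.Eventually.of_forall fun t ht => ?_
    rw [uIoc_of_le (by norm_num : (0:ℝ) ≤ 2)] at ht
    obtain ⟨ht0, ht2⟩ := ht
    have hpow : (0:ℝ) < t ^ (-(1/2) : ℝ) := rpow_pos_of_pos ht0 _
    have hR : |2 * t ^ (-(1/2):ℝ)| = 2 * t ^ (-(1/2):ℝ) := abs_of_pos (by positivity)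
    rw [Real.norm_eq_abs, Real.norm_eq_abs, hR]
    rcases le_or_gt 1 t with h1 | h1
    · rw [abs_of_nonneg (Real.log_nonneg h1)]
      have h2 : Real.log t ≤ Real.log 2 := Real.log_le_log ht0 ht2
      have h3 : (2:ℝ) ^ (-(1/2):ℝ) ≤ t ^ (-(1/2):ℝ) := by
        apply Real.rpow_le_rpow_of_nonpos ht0 ht2 (by norm_num)
      have h4 : Real.log 2 ≤ 1 := by
        calc Real.log 2 ≤ 2 - 1 := Real.log_le_sub_one_of_pos (by norm_num)
        _ = 1 := by norm_num
      have h5 : (1:ℝ) ≤ 2 * (2:ℝ) ^ (-(1/2):ℝ) := by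
        rw [Real.rpow_neg (by norm_num), ← Real.sqrt_eq_rpow, ← div_eq_mul_inv]
        have hs := Real.sq_sqrt (by norm_num : (0:ℝ) ≤ 2)
        have hs0 := Real.sqrt_nonneg 2
        have h2s : (0:ℝ) < Real.sqrt 2 := by nlinarith
        rw [le_div_iff₀ h2s]
        nlinarith
      calc Real.log t ≤ 1 := h2.trans h4
        _ ≤ 2 * (2:ℝ) ^ (-(1/2):ℝ) := h5
        _ ≤ 2 * t ^ (-(1/2):ℝ) := by nlinarith
    · rw [abs_of_nonpos (Real.log_nonpos ht0.le h1.le), neg_le]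
      have : Real.log (t ^ (-(1/2) : ℝ)) ≤ t ^ (-(1/2) : ℝ) := by
        calc Real.log (t ^ (-(1/2) : ℝ)) ≤ t ^ (-(1/2) : ℝ) - 1 :=
          Real.log_le_sub_one_of_pos hpow
        _ ≤ _ := by linarith
      rw [Real.log_rpow ht0] at this
      nlinarith

lemma II_logsin_half : IntervalIntegrable (fun t => Real.log (Real.sin t)) volume 0 (π/2) := by
  have hlog : IntervalIntegrable Real.log volume 0 (π/2) :=
    II_log02.mono_set (by
      rw [uIcc_of_le (by positivity), uIcc_of_le (by norm_num : (0:ℝ) ≤ 2)]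
      exact Icc_subset_Icc le_rfl (by nlinarith [pi_lt_d2]))
  have hg : IntervalIntegrable (fun t : ℝ => ‖Real.log t‖ + Real.log (π/2)) volume 0 (π/2) :=
    hlog.norm.add (intervalIntegrable_const)
  refine hg.mono_fun ((Real.measurable_log.comp measurable_sin).aestronglyMeasurable.restrict) ?_
  rw [Filter.EventuallyLE, ae_restrict_iff' measurableSet_uIoc]
  refine Filter.Eventually.of_forall fun t ht => ?_
  rw [uIoc_of_le (by positivity : (0:ℝ) ≤ π/2)] at ht
  obtain ⟨ht0, ht2⟩ := ht
  have hsp : 0 < Real.sin t := Real.sin_pos_of_pos_of_lt_pi ht0 (by nlinarith [pi_pos])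
  have hs1 : Real.sin t ≤ 1 := Real.sin_le_one t
  have hlow : 2/π * t ≤ Real.sin t := Real.mul_le_sin ht0.le ht2
  have hπ : (0:ℝ) < π := pi_pos
  -- ‖log (sin t)‖ = -log (sin t) ≤ -(log (2/π) + log t) = log (π/2) - log t
  have h1 : Real.log (2/π * t) ≤ Real.log (Real.sin t) := Real.log_le_log (by positivity) hlow
  have h2 : Real.log (2/π * t) = Real.log t - Real.log (π/2) := by
    rw [Real.log_mul (by positivity) ht0.ne', Real.log_div (by norm_num) hπ.ne',
      Real.log_div hπ.ne' (by norm_num : (2:ℝ) ≠ 0)]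
    ring
  have hlogsin : Real.log (Real.sin t) ≤ 0 := Real.log_nonpos hsp.le hs1
  rw [Real.norm_eq_abs, Real.norm_eq_abs, abs_of_nonpos hlogsin]
  have hRnn : 0 ≤ |Real.log t| + Real.log (π/2) := by
    have : (0:ℝ) ≤ Real.log (π/2) := Real.log_nonneg (by nlinarith [Real.pi_gt_three])
    positivity
  simp only [Real.norm_eq_abs]
  rw [abs_of_nonneg hRnn]
  have := neg_abs_le (Real.log t)
  linarith [h1, h2.symm ▸ h1]

lemma II_logsin_pi : IntervalIntegrable (fun t => Real.log (Real.sin t)) volume 0 π := by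
  have h2 : IntervalIntegrable (fun t => Real.log (Real.sin t)) volume (π/2) π := by
    have h := (II_logsin_half.comp_sub_left π).symm
    simp only [Real.sin_pi_sub] at h
    norm_num at h
    have heq : π - π/2 = π/2 := by ring
    rwa [heq] at h
  exact II_logsin_half.trans h2

/-- The integrand of the Lobachevsky function. -/
noncomputable def lphi (t : ℝ) : ℝ := Real.log |2 * Real.sin t|

lemma lphi_eq {t : ℝ} (h : Real.sin t ≠ 0) : lphi t = Real.log 2 + Real.log (Real.sin t) := by
  unfold lphi
  rw [abs_mul, abs_two, Real.log_mul (by norm_num) (by simpa [abs_ne_zero] using h),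
    Real.log_abs]

lemma lphi_ae_eq : ∀ᵐ t ∂(volume.restrict (Set.uIoc (0:ℝ) π)),
    lphi t = Real.log 2 + Real.log (Real.sin t) := by
  refine ae_restrict_of_ae ?_
  have hc : ∀ᵐ t : ℝ ∂volume, t ∉ ({n : ℝ | ∃ k : ℤ, n = k * π}) := by
    apply Set.Countable.ae_notMem
    exact (Set.countable_range fun k : ℤ => (k : ℝ) * π).mono
      (fun x hx => by obtain ⟨k, hk⟩ := hx; exact ⟨k, hk.symm⟩)
  filter_upwards [hc] with t ht
  refine lphi_eq fun hs => ht ?_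
  obtain ⟨k, hk⟩ := Real.sin_eq_zero_iff.mp hs
  exact ⟨k, hk.symm⟩

lemma II_lphi : IntervalIntegrable lphi volume 0 π := by
  have h : IntervalIntegrable (fun t => Real.log 2 + Real.log (Real.sin t)) volume 0 π :=
    intervalIntegrable_const.add II_logsin_pi
  rw [intervalIntegrable_iff] at h ⊢
  exact h.congr (lphi_ae_eq.mono fun t ht => ht.symm)

lemma II_logcos_half : IntervalIntegrable (fun t => Real.log (Real.cos t)) volume 0 (π/2) := by
  have h := (II_logsin_half.comp_sub_left (π/2)).symm
  simp only [Real.sin_pi_div_two_sub] at h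
  norm_num at h
  exact h

lemma int_logcos : ∫ t in (0:ℝ)..(π/2), Real.log (Real.cos t)
    = ∫ t in (0:ℝ)..(π/2), Real.log (Real.sin t) := by
  have h := integral_comp_sub_left (a := (0:ℝ)) (b := π/2)
    (fun t => Real.log (Real.sin t)) (π/2)
  simp only [Real.sin_pi_div_two_sub] at h
  norm_num at h
  rw [← h]

lemma int_logsin_split : ∫ t in (0:ℝ)..π, Real.log (Real.sin t)
    = 2 * ∫ t in (0:ℝ)..(π/2), Real.log (Real.sin t) := by
  have hsecond : ∫ t in (π/2:ℝ)..π, Real.log (Real.sin t)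
      = ∫ t in (0:ℝ)..(π/2), Real.log (Real.sin t) := by
    have h := integral_comp_sub_left (a := (0:ℝ)) (b := π/2)
      (fun t => Real.log (Real.sin t)) π
    simp only [Real.sin_pi_sub] at h
    norm_num at h
    rw [show π - π/2 = π/2 from by ring] at h
    rw [h]
  have hsplit := integral_add_adjacent_intervals (a := (0:ℝ)) (b := π/2) (c := π)
    II_logsin_half (by
      have h := (II_logsin_half.comp_sub_left π).symm
      simp only [Real.sin_pi_sub] at h
      norm_num at h
      have heq : π - π/2 = π/2 := by ring
      rwa [heq] at h)
  rw [← hsplit, hsecond]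
  ring

lemma int_logsin : ∫ t in (0:ℝ)..π, Real.log (Real.sin t) = -(π * Real.log 2) := by
  set J := ∫ t in (0:ℝ)..(π/2), Real.log (Real.sin t) with hJ
  -- duplication
  have hdup : ∫ x in (0:ℝ)..(π/2), Real.log (Real.sin (2*x))
      = (2:ℝ)⁻¹ • ∫ t in (0:ℝ)..π, Real.log (Real.sin t) := by
    have h := integral_comp_mul_left (a := (0:ℝ)) (b := π/2)
      (fun t => Real.log (Real.sin t)) (c := 2) (by norm_num)
    rw [show (2:ℝ) * 0 = 0 from by ring, show 2*(π/2) = π from by ring] at h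
    exact h
  have hexp : ∫ x in (0:ℝ)..(π/2), Real.log (Real.sin (2*x))
      = ∫ x in (0:ℝ)..(π/2), (Real.log 2 + Real.log (Real.sin x) + Real.log (Real.cos x)) := by
    apply intervalIntegral.integral_congr_ae
    have hc : ∀ᵐ x : ℝ ∂volume, x ≠ π/2 := by
      simpa using (Set.countable_singleton (π/2)).ae_notMem (μ := volume)
    filter_upwards [hc] with x hx hmem
    rw [uIoc_of_le (by positivity : (0:ℝ) ≤ π/2)] at hmem
    obtain ⟨hx0, hx2⟩ := hmem
    have hx2' : x < π/2 := lt_of_le_of_ne hx2 hx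
    have hs : 0 < Real.sin x := Real.sin_pos_of_pos_of_lt_pi hx0 (by nlinarith [pi_pos])
    have hcos : 0 < Real.cos x := Real.cos_pos_of_mem_Ioo ⟨by nlinarith [pi_pos], hx2'⟩
    rw [Real.sin_two_mul, Real.log_mul (by positivity) hcos.ne', Real.log_mul (by norm_num) hs.ne']
  have hint : ∫ x in (0:ℝ)..(π/2), (Real.log 2 + Real.log (Real.sin x) + Real.log (Real.cos x))
      = (π/2) * Real.log 2 + J + J := by
    rw [integral_add (intervalIntegrable_const.add II_logsin_half) II_logcos_half,
      integral_add intervalIntegrable_const II_logsin_half]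
    rw [intervalIntegral.integral_const, int_logcos]
    simp [smul_eq_mul, hJ]
  have hfull := int_logsin_split
  rw [hexp, hint] at hdup
  rw [hfull] at hdup ⊢
  rw [smul_eq_mul] at hdup
  linarith

lemma int_lphi : ∫ t in (0:ℝ)..π, lphi t = 0 := by
  have h : ∫ t in (0:ℝ)..π, lphi t
      = ∫ t in (0:ℝ)..π, (Real.log 2 + Real.log (Real.sin t)) :=
    integral_congr_ae (by
      have := lphi_ae_eq
      rw [ae_restrict_iff' measurableSet_uIoc] at this
      filter_upwards [this] with t ht hmem
      exact ht hmem)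
  rw [h, integral_add intervalIntegrable_const II_logsin_pi, intervalIntegral.integral_const, int_logsin]
  simp [smul_eq_mul]

lemma Lob_eq (x : ℝ) : Lob x = -∫ t in (0:ℝ)..x, lphi t := rfl

lemma Lob_zero : Lob 0 = 0 := by simp [Lob]

lemma Lob_pi : Lob π = 0 := by rw [Lob_eq, int_lphi, neg_zero]

lemma lphi_measurable : Measurable lphi :=
  Real.measurable_log.comp ((Real.measurable_sin.const_mul 2).abs)

lemma Lob_continuousOn : ContinuousOn Lob (Icc 0 π) := by
  have h := continuousOn_primitive_interval' (μ := volume) (f := lphi)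
    (b₁ := (0:ℝ)) (b₂ := π) II_lphi (left_mem_uIcc)
  have h2 : ContinuousOn (fun x => -∫ t in (0:ℝ)..x, lphi t) (uIcc (0:ℝ) π) := h.neg
  rw [uIcc_of_le pi_pos.le] at h2
  exact h2

lemma II_lphi_sub {θ : ℝ} (h0 : 0 ≤ θ) (h1 : θ ≤ π) : IntervalIntegrable lphi volume 0 θ :=
  II_lphi.mono_set (by rw [uIcc_of_le h0, uIcc_of_le pi_pos.le]; exact Icc_subset_Icc le_rfl h1)

lemma Lob_hasDerivAt {θ : ℝ} (h0 : 0 < θ) (h1 : θ < π) :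
    HasDerivAt Lob (-Real.log |2 * Real.sin θ|) θ := by
  have hsin : Real.sin θ ≠ 0 := (Real.sin_pos_of_pos_of_lt_pi h0 h1).ne'
  have hcont : ContinuousAt lphi θ := by
    have habs : ContinuousAt (fun t => |2 * Real.sin t|) θ :=
      ((continuous_const.mul Real.continuous_sin).abs).continuousAt
    exact (Real.continuousAt_log (by simp [hsin])).comp habs
  have hd : HasDerivAt (fun u => ∫ t in (0:ℝ)..u, lphi t) (lphi θ) θ :=
    integral_hasDerivAt_right (II_lphi_sub h0.le h1.le)
      lphi_measurable.stronglyMeasurable.stronglyMeasurableAtFilter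
      hcont
  exact hd.neg

lemma arccos_lt_pi' {x : ℝ} (h : -1 < x) : Real.arccos x < π := by
  have h2 := Real.arccos_pos.2 (show -x < 1 by linarith)
  rw [Real.arccos_neg] at h2; linarith

/-- In the broken case `b + c ≤ a`, the three angles are `π, 0, 0`. -/
lemma eang_broken {a b c : ℝ} (ha : 0 < a) (hb : 0 < b) (hc : 0 < c) (h : b + c ≤ a) :
    eang a b c = π ∧ eang b c a = 0 ∧ eang c a b = 0 := by
  refine ⟨Real.arccos_of_le_neg_one ?_, Real.arccos_of_one_le ?_, Real.arccos_of_one_le ?_⟩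
  · rw [div_le_iff₀ (by positivity)]; nlinarith
  · rw [le_div_iff₀ (by positivity)]; nlinarith
  · rw [le_div_iff₀ (by positivity)]; nlinarith

section deriv

variable {x y z : ℝ}

set_option maxHeartbeats 2000000 in
lemma fTri_aux_hasDerivAt
    (h1 : Real.exp x < Real.exp y + Real.exp z)
    (h2 : Real.exp y < Real.exp z + Real.exp x)
    (h3 : Real.exp z < Real.exp x + Real.exp y) :
    HasDerivAt (fun u => eang (Real.exp u) (Real.exp y) (Real.exp z) * u +
      eang (Real.exp y) (Real.exp z) (Real.exp u) * y +
      eang (Real.exp z) (Real.exp u) (Real.exp y) * z +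
      Lob (eang (Real.exp u) (Real.exp y) (Real.exp z)) +
      Lob (eang (Real.exp y) (Real.exp z) (Real.exp u)) +
      Lob (eang (Real.exp z) (Real.exp u) (Real.exp y)))
      (eang (Real.exp x) (Real.exp y) (Real.exp z)) x := by
  set a := Real.exp x with hadef
  set b := Real.exp y with hbdef
  set c := Real.exp z with hcdef
  have ha : 0 < a := Real.exp_pos x
  have hb : 0 < b := Real.exp_pos y
  have hc : 0 < c := Real.exp_pos z
  set H : ℝ := 2*(a^2*b^2) + 2*(b^2*c^2) + 2*(c^2*a^2) - a^4 - b^4 - c^4 with hHdef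
  have hH : 0 < H := by
    have hfac : H = (a+b+c)*((b+c)-a)*((c+a)-b)*((a+b)-c) := by rw [hHdef]; ring
    rw [hfac]
    exact mul_pos (mul_pos (mul_pos (by linarith) (by linarith)) (by linarith)) (by linarith)
  set s : ℝ := Real.sqrt H with hsdef
  have hs : 0 < s := Real.sqrt_pos.2 hH
  have hs2 : s^2 = H := Real.sq_sqrt hH.le
  -- the three cosines
  set qa : ℝ := (b^2 + c^2 - a^2) / (2*b*c) with hqadef
  set qb : ℝ := (c^2 + a^2 - b^2) / (2*c*a) with hqbdef
  set qc : ℝ := (a^2 + b^2 - c^2) / (2*a*b) with hqcdef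
  have hqa1 : -1 < qa := by rw [hqadef, lt_div_iff₀ (by positivity)]; nlinarith
  have hqa2 : qa < 1 := by rw [hqadef, div_lt_iff₀ (by positivity)]; nlinarith
  have hqb1 : -1 < qb := by rw [hqbdef, lt_div_iff₀ (by positivity)]; nlinarith
  have hqb2 : qb < 1 := by rw [hqbdef, div_lt_iff₀ (by positivity)]; nlinarith
  have hqc1 : -1 < qc := by rw [hqcdef, lt_div_iff₀ (by positivity)]; nlinarith
  have hqc2 : qc < 1 := by rw [hqcdef, div_lt_iff₀ (by positivity)]; nlinarith
  -- the sines
  have hsqa : Real.sqrt (1 - qa^2) = s / (2*b*c) := by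
    have h' : 1 - qa^2 = (s/(2*b*c))^2 := by
      have e1 : (s/(2*b*c))^2 = H / (2*b*c)^2 := by rw [div_pow, hs2]
      rw [e1, hqadef, hHdef]; field_simp; ring
    rw [h', Real.sqrt_sq (by positivity)]
  have hsqb : Real.sqrt (1 - qb^2) = s / (2*c*a) := by
    have h' : 1 - qb^2 = (s/(2*c*a))^2 := by
      have e1 : (s/(2*c*a))^2 = H / (2*c*a)^2 := by rw [div_pow, hs2]
      rw [e1, hqbdef, hHdef]; field_simp; ring
    rw [h', Real.sqrt_sq (by positivity)]
  have hsqc : Real.sqrt (1 - qc^2) = s / (2*a*b) := by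
    have h' : 1 - qc^2 = (s/(2*a*b))^2 := by
      have e1 : (s/(2*a*b))^2 = H / (2*a*b)^2 := by rw [div_pow, hs2]
      rw [e1, hqcdef, hHdef]; field_simp; ring
    rw [h', Real.sqrt_sq (by positivity)]
  -- derivative of exp^2
  have hsq : HasDerivAt (fun u => Real.exp u ^ 2) (2*a^2) x := by
    have h := (Real.hasDerivAt_exp x).fun_pow 2
    convert h using 1
    · rfl
    · rfl
    rw [← hadef]; ring
  -- derivatives of the three cosine functions
  have hqa' : HasDerivAt (fun u => (b^2 + c^2 - Real.exp u ^ 2) / (2*b*c))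
      (-(2*a^2)/(2*b*c)) x := by
    have h := (hsq.const_sub (b^2 + c^2)).div_const (2*b*c)
    convert h using 1
  have hqb' : HasDerivAt (fun u => (c^2 + Real.exp u ^ 2 - b^2) / (2*c*Real.exp u))
      ((2*a^2 * (2*c*a) - (c^2 + a^2 - b^2) * (2*c*a)) / (2*c*a)^2) x := by
    have hN : HasDerivAt (fun u => c^2 + Real.exp u ^ 2 - b^2) (2*a^2) x :=
      (hsq.const_add (c^2)).sub_const (b^2)
    have hD : HasDerivAt (fun u => 2*c*Real.exp u) (2*c*a) x := by
      have h := (Real.hasDerivAt_exp x).const_mul (2*c)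
      convert h using 1
    exact hN.div hD (by positivity)
  have hqc' : HasDerivAt (fun u => (Real.exp u ^ 2 + b^2 - c^2) / (2*Real.exp u*b))
      ((2*a^2 * (2*a*b) - (a^2 + b^2 - c^2) * (2*a*b)) / (2*a*b)^2) x := by
    have hN : HasDerivAt (fun u => Real.exp u ^ 2 + b^2 - c^2) (2*a^2) x :=
      (hsq.add_const (b^2)).sub_const (c^2)
    have hD : HasDerivAt (fun u => 2*Real.exp u*b) (2*a*b) x := by
      have h := (Real.hasDerivAt_exp x).const_mul (2*b)
      convert h using 1
      · rfl
      · rfl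
      · funext u; ring
      · ring
    exact hN.div hD (by positivity)
  -- derivatives of the three angle functions
  have hA : HasDerivAt (fun u => eang (Real.exp u) b c) (2*a^2/s) x := by
    have harc := Real.hasDerivAt_arccos hqa1.ne' hqa2.ne
    have h := harc.comp x hqa'
    have heq : (fun u => eang (Real.exp u) b c) =
        Real.arccos ∘ (fun u => (b^2 + c^2 - Real.exp u ^ 2) / (2*b*c)) := by
      funext u; simp [eang, Function.comp]
    rw [heq]
    convert h using 1
    · rfl
    · rfl
    rw [hsqa]
    field_simp
  have hB : HasDerivAt (fun u => eang b c (Real.exp u)) (-(a^2 + b^2 - c^2)/s) x := by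
    have harc := Real.hasDerivAt_arccos hqb1.ne' hqb2.ne
    have h := harc.comp x hqb'
    have heq : (fun u => eang b c (Real.exp u)) =
        Real.arccos ∘ (fun u => (c^2 + Real.exp u ^ 2 - b^2) / (2*c*Real.exp u)) := by
      funext u; simp [eang, Function.comp]
    rw [heq]
    convert h using 1
    · rfl
    · rfl
    rw [hsqb]
    field_simp
    ring
  have hC : HasDerivAt (fun u => eang c (Real.exp u) b) (-(a^2 + c^2 - b^2)/s) x := by
    have harc := Real.hasDerivAt_arccos hqc1.ne' hqc2.ne
    have h := harc.comp x hqc'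
    have heq : (fun u => eang c (Real.exp u) b) =
        Real.arccos ∘ (fun u => (Real.exp u ^ 2 + b^2 - c^2) / (2*Real.exp u*b)) := by
      funext u; simp [eang, Function.comp]
    rw [heq]
    convert h using 1
    · rfl
    · rfl
    rw [hsqc]
    field_simp
    ring
  -- values of the angles and their sines
  have hAval : eang a b c = Real.arccos qa := by rw [eang, hqadef]
  have hBval : eang b c a = Real.arccos qb := by rw [eang, hqbdef]
  have hCval : eang c a b = Real.arccos qc := by rw [eang, hqcdef]
  have hA0 : 0 < eang a b c := by rw [hAval]; exact Real.arccos_pos.2 hqa2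
  have hAπ : eang a b c < π := by rw [hAval]; exact arccos_lt_pi' hqa1
  have hB0 : 0 < eang b c a := by rw [hBval]; exact Real.arccos_pos.2 hqb2
  have hBπ : eang b c a < π := by rw [hBval]; exact arccos_lt_pi' hqb1
  have hC0 : 0 < eang c a b := by rw [hCval]; exact Real.arccos_pos.2 hqc2
  have hCπ : eang c a b < π := by rw [hCval]; exact arccos_lt_pi' hqc1
  have hsinA : Real.sin (eang a b c) = s / (2*b*c) := by
    rw [hAval, Real.sin_arccos, hsqa]
  have hsinB : Real.sin (eang b c a) = s / (2*c*a) := by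
    rw [hBval, Real.sin_arccos, hsqb]
  have hsinC : Real.sin (eang c a b) = s / (2*a*b) := by
    rw [hCval, Real.sin_arccos, hsqc]
  -- log of |2 sin| values
  have hlA : Real.log |2 * Real.sin (eang a b c)| = Real.log s - Real.log b - Real.log c := by
    rw [hsinA, abs_of_pos (by positivity), show 2 * (s / (2*b*c)) = s / (b*c) by ring,
      Real.log_div hs.ne' (by positivity), Real.log_mul hb.ne' hc.ne']
    ring
  have hlB : Real.log |2 * Real.sin (eang b c a)| = Real.log s - Real.log c - Real.log a := by
    rw [hsinB, abs_of_pos (by positivity), show 2 * (s / (2*c*a)) = s / (c*a) by ring,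
      Real.log_div hs.ne' (by positivity), Real.log_mul hc.ne' ha.ne']
    ring
  have hlC : Real.log |2 * Real.sin (eang c a b)| = Real.log s - Real.log a - Real.log b := by
    rw [hsinC, abs_of_pos (by positivity), show 2 * (s / (2*a*b)) = s / (a*b) by ring,
      Real.log_div hs.ne' (by positivity), Real.log_mul ha.ne' hb.ne']
    ring
  -- Lob derivatives
  have hLA : HasDerivAt (fun u => Lob (eang (Real.exp u) b c))
      (-(Real.log s - Real.log b - Real.log c) * (2*a^2/s)) x := by
    have h := (Lob_hasDerivAt hA0 hAπ).comp x hA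
    rw [hlA] at h
    exact h
  have hLB : HasDerivAt (fun u => Lob (eang b c (Real.exp u)))
      (-(Real.log s - Real.log c - Real.log a) * (-(a^2 + b^2 - c^2)/s)) x := by
    have h := (Lob_hasDerivAt hB0 hBπ).comp x hB
    rw [hlB] at h
    exact h
  have hLC : HasDerivAt (fun u => Lob (eang c (Real.exp u) b))
      (-(Real.log s - Real.log a - Real.log b) * (-(a^2 + c^2 - b^2)/s)) x := by
    have h := (Lob_hasDerivAt hC0 hCπ).comp x hC
    rw [hlC] at h
    exact h
  -- assemble
  have hsum := ((((((hA.fun_mul (hasDerivAt_id x)).fun_add (hB.mul_const y)).fun_add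
    (hC.mul_const z)).fun_add hLA).fun_add hLB).fun_add hLC)
  convert hsum using 1
  · rfl
  · rfl
  · rfl
  have hxa : x = Real.log a := (Real.log_exp x).symm
  have hyb : y = Real.log b := (Real.log_exp y).symm
  have hzc : z = Real.log c := (Real.log_exp z).symm
  rw [hAval, id_eq]
  rw [hxa, hyb, hzc]
  field_simp
  ring
end deriv

lemma fTri_fst_eq (y z : ℝ) : (fun u => fTri (u, y, z)) =
    (fun u => eang (Real.exp u) (Real.exp y) (Real.exp z) * u +
      eang (Real.exp y) (Real.exp z) (Real.exp u) * y +
      eang (Real.exp z) (Real.exp u) (Real.exp y) * z +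
      Lob (eang (Real.exp u) (Real.exp y) (Real.exp z)) +
      Lob (eang (Real.exp y) (Real.exp z) (Real.exp u)) +
      Lob (eang (Real.exp z) (Real.exp u) (Real.exp y))) := rfl

lemma eang_mem (a b c : ℝ) : eang a b c ∈ Icc 0 π :=
  ⟨Real.arccos_nonneg _, Real.arccos_le_pi _⟩

lemma fTri_fst_continuous (y z : ℝ) : Continuous (fun u => fTri (u, y, z)) := by
  rw [fTri_fst_eq]
  have hb : (0:ℝ) < Real.exp y := Real.exp_pos y
  have hc : (0:ℝ) < Real.exp z := Real.exp_pos z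
  have cA : Continuous (fun u => eang (Real.exp u) (Real.exp y) (Real.exp z)) := by
    simp only [eang]
    exact Real.continuous_arccos.comp
      ((continuous_const.sub (Real.continuous_exp.pow 2)).div_const _)
  have cB : Continuous (fun u => eang (Real.exp y) (Real.exp z) (Real.exp u)) := by
    simp only [eang]
    apply Real.continuous_arccos.comp
    exact ((continuous_const.add (Real.continuous_exp.pow 2)).sub continuous_const).div
      (continuous_const.mul Real.continuous_exp) (fun u => by positivity)
  have cC : Continuous (fun u => eang (Real.exp z) (Real.exp u) (Real.exp y)) := by
    simp only [eang]
    apply Real.continuous_arccos.comp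
    exact (((Real.continuous_exp.pow 2).add continuous_const).sub continuous_const).div
      ((continuous_const.mul Real.continuous_exp).mul continuous_const) (fun u => by positivity)
  have LA : Continuous (fun u => Lob (eang (Real.exp u) (Real.exp y) (Real.exp z))) :=
    Lob_continuousOn.comp_continuous cA (fun u => eang_mem _ _ _)
  have LB : Continuous (fun u => Lob (eang (Real.exp y) (Real.exp z) (Real.exp u))) :=
    Lob_continuousOn.comp_continuous cB (fun u => eang_mem _ _ _)
  have LC : Continuous (fun u => Lob (eang (Real.exp z) (Real.exp u) (Real.exp y))) :=
    Lob_continuousOn.comp_continuous cC (fun u => eang_mem _ _ _)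
  exact ((((((cA.mul continuous_id).add (cB.mul continuous_const)).add
    (cC.mul continuous_const)).add LA).add LB).add LC)

lemma fTri_broken_a {x y z : ℝ} (h : Real.exp y + Real.exp z ≤ Real.exp x) :
    fTri (x, y, z) = π * x := by
  obtain ⟨e1, e2, e3⟩ := eang_broken (Real.exp_pos x) (Real.exp_pos y) (Real.exp_pos z) h
  simp only [fTri, e1, e2, e3, Lob_zero, Lob_pi]
  ring

lemma fTri_broken_b {x y z : ℝ} (h : Real.exp z + Real.exp x ≤ Real.exp y) :
    fTri (x, y, z) = π * y := by
  obtain ⟨e1, e2, e3⟩ := eang_broken (Real.exp_pos y) (Real.exp_pos z) (Real.exp_pos x) h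
  simp only [fTri, e1, e2, e3, Lob_zero, Lob_pi]
  ring

lemma fTri_broken_c {x y z : ℝ} (h : Real.exp x + Real.exp y ≤ Real.exp z) :
    fTri (x, y, z) = π * z := by
  obtain ⟨e1, e2, e3⟩ := eang_broken (Real.exp_pos z) (Real.exp_pos x) (Real.exp_pos y) h
  simp only [fTri, e1, e2, e3, Lob_zero, Lob_pi]
  ring

/-- Monotonicity of `fTri - πx` across an interval on which the interior
consists of strict triangles. -/
lemma g_antitone_tri (y z : ℝ) {u v : ℝ} (huv : u ≤ v)
    (htri : ∀ w, u < w → w < v →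
      Real.exp w < Real.exp y + Real.exp z ∧
      Real.exp y < Real.exp z + Real.exp w ∧
      Real.exp z < Real.exp w + Real.exp y) :
    fTri (v, y, z) - π * v ≤ fTri (u, y, z) - π * u := by
  set g := fun w => fTri (w, y, z) - π * w with hg
  have hganti : AntitoneOn g (Icc u v) := by
    apply antitoneOn_of_deriv_nonpos (convex_Icc u v)
    · exact ((fTri_fst_continuous y z).sub (continuous_const.mul continuous_id)).continuousOn
    · rw [interior_Icc]
      intro w hw
      obtain ⟨h1, h2, h3⟩ := htri w hw.1 hw.2
      have hd : HasDerivAt g (eang (Real.exp w) (Real.exp y) (Real.exp z) - π * 1) w := by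
        have hF : HasDerivAt (fun u => fTri (u, y, z))
            (eang (Real.exp w) (Real.exp y) (Real.exp z)) w := by
          rw [fTri_fst_eq]
          exact fTri_aux_hasDerivAt h1 h2 h3
        exact hF.sub ((hasDerivAt_id w).const_mul π)
      exact hd.differentiableAt.differentiableWithinAt
    · rw [interior_Icc]
      intro w hw
      obtain ⟨h1, h2, h3⟩ := htri w hw.1 hw.2
      have hd : HasDerivAt g (eang (Real.exp w) (Real.exp y) (Real.exp z) - π * 1) w := by
        have hF : HasDerivAt (fun u => fTri (u, y, z))
            (eang (Real.exp w) (Real.exp y) (Real.exp z)) w := by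
          rw [fTri_fst_eq]
          exact fTri_aux_hasDerivAt h1 h2 h3
        exact hF.sub ((hasDerivAt_id w).const_mul π)
      rw [hd.deriv]
      have := Real.arccos_le_pi ((Real.exp y^2 + Real.exp z^2 - Real.exp w^2) / (2*Real.exp y*Real.exp z))
      simp only [eang]
      linarith
  exact hganti ⟨le_rfl, huv⟩ ⟨huv, le_rfl⟩ huv

/-- The key one-variable inequality. -/
lemma pi_mul_le_fTri (x y z : ℝ) : π * x ≤ fTri (x, y, z) := by
  set a := Real.exp x with hadef
  set b := Real.exp y with hbdef
  set c := Real.exp z with hcdef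
  have ha : 0 < a := Real.exp_pos x
  have hb : 0 < b := Real.exp_pos y
  have hc : 0 < c := Real.exp_pos z
  rcases le_or_gt (b + c) a with hcase | hlt
  · rw [fTri_broken_a hcase]
  -- a < b + c
  set xp := Real.log (b + c) with hxpdef
  have hexp_xp : Real.exp xp = b + c := Real.exp_log (by positivity)
  have hxxp : x < xp := by
    have := hlt
    rw [← hexp_xp] at this
    exact Real.exp_lt_exp.mp this
  have hgxp : fTri (xp, y, z) = π * xp := fTri_broken_a (le_of_eq hexp_xp.symm)
  rcases le_or_gt b (c + a) with hcb | hcb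
  · rcases le_or_gt c (a + b) with hcc | hcc
    · -- strict or borderline triangle at x itself; use [x, xp]
      have h := g_antitone_tri y z hxxp.le (fun w hw1 hw2 => by
        have hew : a < Real.exp w := Real.exp_lt_exp.mpr hw1
        have hew2 : Real.exp w < b + c := by
          rw [← hexp_xp]; exact Real.exp_lt_exp.mpr hw2
        exact ⟨hew2, by linarith, by linarith⟩)
      rw [hgxp] at h
      linarith
    · -- c > a + b : broken on c-side below log (c - b)
      have hcb' : b < c := by linarith
      set xm := Real.log (c - b) with hxmdef
      have hexp_xm : Real.exp xm = c - b := Real.exp_log (by linarith)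
      have hxxm : x ≤ xm := by
        have : a ≤ c - b := by linarith
        rw [← hexp_xm] at this
        exact (Real.exp_le_exp.mp this)
      have hxm_xp : xm ≤ xp := by
        have : c - b ≤ b + c := by linarith
        rw [← hexp_xm, ← hexp_xp] at this
        exact Real.exp_le_exp.mp this
      -- on [x, xm] : fTri = π z
      have hconst : ∀ w, w ≤ xm → fTri (w, y, z) = π * z := by
        intro w hw
        apply fTri_broken_c
        have : Real.exp w ≤ c - b := by
          rw [← hexp_xm]; exact Real.exp_le_exp.mpr hw
        rw [← hbdef, ← hcdef]; linarith
      -- on [xm, xp] : strict triangles in the interior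
      have h2 := g_antitone_tri y z hxm_xp (fun w hw1 hw2 => by
        have hew1 : c - b < Real.exp w := by rw [← hexp_xm]; exact Real.exp_lt_exp.mpr hw1
        have hew2 : Real.exp w < b + c := by rw [← hexp_xp]; exact Real.exp_lt_exp.mpr hw2
        have hewpos : 0 < Real.exp w := Real.exp_pos w
        exact ⟨hew2, by linarith, by linarith⟩)
      rw [hgxp, hconst xm le_rfl] at h2
      have h3 : fTri (x, y, z) = π * z := hconst x hxxm
      rw [h3]
      have hπ : 0 < π := pi_pos
      nlinarith [mul_le_mul_of_nonneg_left hxxm hπ.le]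
  · -- b > c + a : broken on b-side below log (b - c)
    have hcb' : c < b := by linarith
    set xm := Real.log (b - c) with hxmdef
    have hexp_xm : Real.exp xm = b - c := Real.exp_log (by linarith)
    have hxxm : x ≤ xm := by
      have : a ≤ b - c := by linarith
      rw [← hexp_xm] at this
      exact (Real.exp_le_exp.mp this)
    have hxm_xp : xm ≤ xp := by
      have : b - c ≤ b + c := by linarith
      rw [← hexp_xm, ← hexp_xp] at this
      exact Real.exp_le_exp.mp this
    have hconst : ∀ w, w ≤ xm → fTri (w, y, z) = π * y := by
      intro w hw
      apply fTri_broken_b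
      have : Real.exp w ≤ b - c := by
        rw [← hexp_xm]; exact Real.exp_le_exp.mpr hw
      rw [← hbdef, ← hcdef]; linarith
    have h2 := g_antitone_tri y z hxm_xp (fun w hw1 hw2 => by
      have hew1 : b - c < Real.exp w := by rw [← hexp_xm]; exact Real.exp_lt_exp.mpr hw1
      have hew2 : Real.exp w < b + c := by rw [← hexp_xp]; exact Real.exp_lt_exp.mpr hw2
      have hewpos : 0 < Real.exp w := Real.exp_pos w
      exact ⟨hew2, by linarith, by linarith⟩)
    rw [hgxp, hconst xm le_rfl] at h2
    have h3 : fTri (x, y, z) = π * y := hconst x hxxm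
    rw [h3]
    have hπ : 0 < π := pi_pos
    nlinarith [mul_le_mul_of_nonneg_left hxxm hπ.le]

lemma fTri_cyclic (x y z : ℝ) : fTri (y, z, x) = fTri (x, y, z) := by
  simp only [fTri]
  ring


/-- The extended triangle function satisfies `f(x,y,z) ≥ π·max{x,y,z}`. -/
theorem fTri_ge_pi_max (p : ℝ × ℝ × ℝ) :
    π * max p.1 (max p.2.1 p.2.2) ≤ fTri p := by
  obtain ⟨x, y, z⟩ := p
  simp only
  have h1 : π * x ≤ fTri (x, y, z) := pi_mul_le_fTri x y z
  have h2 : π * y ≤ fTri (x, y, z) := by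
    rw [← fTri_cyclic x y z]; exact pi_mul_le_fTri y z x
  have h3 : π * z ≤ fTri (x, y, z) := by
    rw [← fTri_cyclic x y z, ← fTri_cyclic y z x]; exact pi_mul_le_fTri z x y
  have hπ : (0:ℝ) ≤ π := pi_pos.le
  rcases le_total x (max y z) with h | h
  · rw [max_eq_right h]
    rcases le_total y z with h' | h'
    · rw [max_eq_right h']; exact h3
    · rw [max_eq_left h']; exact h2
  · rw [max_eq_left h]; exact h1
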